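/- For every real x with x_c^− < x < x_c^+, one has μ + x > 0 (so Q_x has positive leading coefficient), the quadratic Q_x has two non-real complex-conjugate roots, and each root has modulus √((ν+x)/(μ+x)). -/

import Mathlib

lemma quad_iff (a b c : ℝ) (w : ℂ) :
    ((a:ℂ) * w^2 - (b:ℂ) * w + (c:ℂ) = 0) ↔
    (a*(w.re^2 - w.im^2) - b*w.re + c = 0 ∧ a*(2*(w.re*w.im)) - b*w.im = 0) := by
  rw [Complex.ext_iff]
  simp only [Complex.add_re, Complex.sub_re, Complex.mul_re, Complex.ofReal_re,
    Complex.ofReal_im, Complex.add_im, Complex.sub_im, Complex.mul_im, Complex.zero_re,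
    Complex.zero_im, pow_two, Complex.mul_re, Complex.mul_im]
  constructor <;> rintro ⟨h1, h2⟩ <;> constructor <;> nlinarith [h1, h2]

set_option maxHeartbeats 2000000 in
theorem stmt8 (κ μ ν : ℝ) (hκ : 1 < κ) (hμ : 0 < μ) (hν : 0 < ν) (x : ℝ)
    (hx1 : (Real.sqrt μ - Real.sqrt (κ * ν)) ^ 2 / (κ - 1) - ν < x)
    (hx2 : x < (Real.sqrt μ + Real.sqrt (κ * ν)) ^ 2 / (κ - 1) - ν) :
    0 < μ + x ∧
    (∃ w : ℂ, (↑(Real.sqrt κ * (μ + x)) : ℂ) * w ^ 2 - (↑(μ + ν + (κ + 1) * x) : ℂ) * w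
        + (↑(Real.sqrt κ * (ν + x)) : ℂ) = 0 ∧ w.im ≠ 0) ∧
    ∀ w : ℂ, (↑(Real.sqrt κ * (μ + x)) : ℂ) * w ^ 2 - (↑(μ + ν + (κ + 1) * x) : ℂ) * w
        + (↑(Real.sqrt κ * (ν + x)) : ℂ) = 0 →
      w.im ≠ 0 ∧
      ((↑(Real.sqrt κ * (μ + x)) : ℂ) * (starRingEnd ℂ w) ^ 2
        - (↑(μ + ν + (κ + 1) * x) : ℂ) * (starRingEnd ℂ w)
        + (↑(Real.sqrt κ * (ν + x)) : ℂ) = 0) ∧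
      ‖w‖ = Real.sqrt ((ν + x) / (μ + x)) := by
  have hκ0 : (0:ℝ) < κ := lt_trans one_pos hκ
  have hκ1 : (0:ℝ) < κ - 1 := by linarith
  have hsκ : 0 < Real.sqrt κ := Real.sqrt_pos.2 hκ0
  have hsμ : Real.sqrt μ ^ 2 = μ := Real.sq_sqrt hμ.le
  have hsν : Real.sqrt (κ * ν) ^ 2 = κ * ν := Real.sq_sqrt (mul_nonneg hκ0.le hν.le)
  have h1 : (Real.sqrt μ - Real.sqrt (κ * ν)) ^ 2 < (x + ν) * (κ - 1) := by
    rw [← div_lt_iff₀ hκ1]; linarith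
  have h2 : (x + ν) * (κ - 1) < (Real.sqrt μ + Real.sqrt (κ * ν)) ^ 2 := by
    rw [← lt_div_iff₀ hκ1]; linarith
  have hνx : 0 < ν + x := by nlinarith [sq_nonneg (Real.sqrt μ - Real.sqrt (κ * ν))]
  set b : ℝ := μ + ν + (κ + 1) * x with hb
  have hD : b ^ 2 < 4 * κ * (μ + x) * (ν + x) := by
    nlinarith [mul_pos (sub_pos.2 h1) (sub_pos.2 h2)]
  have hμx : 0 < μ + x := by nlinarith [sq_nonneg b, mul_pos hκ0 hνx]
  set a : ℝ := Real.sqrt κ * (μ + x) with ha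
  set c : ℝ := Real.sqrt κ * (ν + x) with hc
  have ha0 : 0 < a := mul_pos hsκ hμx
  have hc0 : 0 < c := mul_pos hsκ hνx
  have hκκ : Real.sqrt κ * Real.sqrt κ = κ := Real.mul_self_sqrt hκ0.le
  have hac : b ^ 2 < 4 * a * c := by
    have : 4 * a * c = 4 * κ * (μ + x) * (ν + x) := by rw [ha, hc]; ring_nf; nlinarith [hκκ]
    linarith [hD, this.ge, this.le]
  -- no real roots
  have hnoreal : ∀ r : ℝ, a * r ^ 2 - b * r + c ≠ 0 := by
    intro r hr
    have e1 : (2 * a * r - b) ^ 2 = 4 * a * (a * r ^ 2 - b * r + c) + (b ^ 2 - 4 * a * c) := by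
      ring
    have e2 := sq_nonneg (2 * a * r - b)
    rw [e1, hr, mul_zero, zero_add] at e2
    linarith
  refine ⟨hμx, ?_, ?_⟩
  · -- existence
    set t : ℝ := Real.sqrt (4 * a * c - b ^ 2) with htdef
    have ht0 : 0 < t := Real.sqrt_pos.2 (by linarith)
    have ht2 : t ^ 2 = 4 * a * c - b ^ 2 := Real.sq_sqrt (by linarith)
    refine ⟨(↑(b / (2 * a)) : ℂ) + (↑(t / (2 * a)) : ℂ) * Complex.I, ?_, ?_⟩
    · rw [quad_iff]
      constructor
      · simp only [Complex.add_re, Complex.ofReal_re, Complex.mul_re, Complex.I_re,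
          Complex.I_im, Complex.ofReal_im, Complex.add_im, Complex.mul_im]
        field_simp
        nlinarith [ht2]
      · simp only [Complex.add_re, Complex.ofReal_re, Complex.mul_re, Complex.I_re,
          Complex.I_im, Complex.ofReal_im, Complex.add_im, Complex.mul_im]
        field_simp
        ring
    · simp only [Complex.add_im, Complex.ofReal_im, Complex.mul_im, Complex.I_im,
        Complex.I_re, Complex.ofReal_re]
      have : t / (2 * a) ≠ 0 := by positivity
      simpa using this
  · intro w hw
    rw [quad_iff] at hw
    obtain ⟨hre, him⟩ := hw
    have hq : w.im ≠ 0 := by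
      intro h0
      exact hnoreal w.re (by rw [h0] at hre; linear_combination hre)
    have hbp : b = 2 * a * w.re := by
      have h2' : w.im * (2 * a * w.re - b) = 0 := by nlinarith [him]
      rcases mul_eq_zero.1 h2' with h | h
      · exact absurd h hq
      · linarith
    refine ⟨hq, ?_, ?_⟩
    · rw [quad_iff]
      simp only [Complex.conj_re, Complex.conj_im]
      constructor
      · nlinarith [hre]
      · nlinarith [him]
    · have hns : w.re ^ 2 + w.im ^ 2 = (ν + x) / (μ + x) := by
        rw [eq_div_iff hμx.ne']
        have key : a * (w.re ^ 2 + w.im ^ 2) = c := by nlinarith [hre, hbp]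
        have : Real.sqrt κ * ((μ + x) * (w.re ^ 2 + w.im ^ 2)) = Real.sqrt κ * (ν + x) := by
          rw [← hc]; rw [← key, ha]; ring
        have := mul_left_cancel₀ hsκ.ne' this
        linarith
      rw [Complex.norm_def, Complex.normSq_apply]
      rw [show w.re * w.re + w.im * w.im = w.re ^ 2 + w.im ^ 2 by ring, hns]
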